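/- E⁻¹O_F is flat as an O_F-module; equivalently, the functor sending an O_F-module M to E⁻¹M := E⁻¹O_F ⊗_{O_F} M is exact. -/

import Mathlib

open LaurentPolynomial

noncomputable section

/-- The ring `O_F = ∏_{n ≥ 1} ℚ[c_n]`. -/
abbrev OF : Type := ∀ _ : ℕ+, Polynomial ℚ

/-- The product of Laurent polynomial rings `∏_{n ≥ 1} ℚ[c_n, c_n⁻¹]`. -/
abbrev LF : Type := ∀ _ : ℕ+, LaurentPolynomial ℚ

/-- The subring of `ℚ[c,c⁻¹]` of Laurent polynomials with no negative-degree terms. -/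
def polyRange : Subring (LaurentPolynomial ℚ) :=
  (Polynomial.toLaurent (R := ℚ)).range

/-- `E⁻¹O_F` : sequences of Laurent polynomials which are polynomial at all but
finitely many indices. -/
def EinvOF : Subring LF where
  carrier := {f : LF | {n : ℕ+ | f n ∉ polyRange}.Finite}
  zero_mem' := by
    refine Set.finite_empty.subset fun n hn => ?_
    simp only [Set.mem_setOf_eq, Pi.zero_apply] at hn
    exact hn (zero_mem _)
  one_mem' := by
    refine Set.finite_empty.subset fun n hn => ?_
    simp only [Set.mem_setOf_eq, Pi.one_apply] at hn
    exact hn (one_mem _)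
  add_mem' := by
    intro a b ha hb
    refine (ha.union hb).subset fun n hn => ?_
    simp only [Set.mem_setOf_eq, Pi.add_apply] at hn
    by_contra h
    simp only [Set.mem_union, Set.mem_setOf_eq, not_or, not_not] at h
    exact hn (add_mem h.1 h.2)
  mul_mem' := by
    intro a b ha hb
    refine (ha.union hb).subset fun n hn => ?_
    simp only [Set.mem_setOf_eq, Pi.mul_apply] at hn
    by_contra h
    simp only [Set.mem_union, Set.mem_setOf_eq, not_or, not_not] at h
    exact hn (mul_mem h.1 h.2)
  neg_mem' := by
    intro a ha
    refine ha.subset fun n hn => ?_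
    simp only [Set.mem_setOf_eq, Pi.neg_apply] at hn
    simp only [Set.mem_setOf_eq]
    exact fun h => hn (neg_mem h)

lemma jFull_mem (f : OF) :
    (fun n => Polynomial.toLaurent (f n) : LF) ∈ EinvOF := by
  refine Set.finite_empty.subset fun n hn => ?_
  exact hn ⟨f n, rfl⟩

/-- The evident ring homomorphism `j : O_F → E⁻¹O_F`. -/
def j : OF →+* EinvOF :=
  (Pi.ringHom fun n => (Polynomial.toLaurent (R := ℚ)).comp (Pi.evalRingHom _ n)).codRestrict
    EinvOF (fun f => jFull_mem f)

/-- `E⁻¹O_F` is an `O_F`-algebra (hence an `O_F`-module) via `j`. -/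
instance : Algebra OF EinvOF := j.toAlgebra

open TensorProduct

/-!
STATEMENT 6: `E⁻¹O_F` is flat as an `O_F`-module (equivalently, the functor
`M ↦ E⁻¹M := E⁻¹O_F ⊗_{O_F} M` is exact).
-/

/-- The multiplicative set of monomial sequences with finitely supported exponents. -/
def monS : Submonoid OF where
  carrier := {f | ∃ k : ℕ+ → ℕ, {n | k n ≠ 0}.Finite ∧ ∀ n, f n = Polynomial.X ^ k n}
  one_mem' := ⟨fun _ => 0, by simp, fun n => by simp⟩
  mul_mem' := by
    rintro a b ⟨k, hk, ha⟩ ⟨l, hl, hb⟩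
    refine ⟨fun n => k n + l n, (hk.union hl).subset fun n hn => ?_, fun n => by
      simp [ha n, hb n, pow_add]⟩
    simp only [Set.mem_setOf_eq] at hn ⊢
    by_contra h
    simp only [Set.mem_union, Set.mem_setOf_eq, not_or, not_not] at h
    omega

lemma j_apply (f : OF) (n : ℕ+) : ((j f : EinvOF) : LF) n = Polynomial.toLaurent (f n) := rfl

lemma algebraMap_eq_j : algebraMap OF EinvOF = j := rfl

instance isLoc : IsLocalization monS EinvOF := by
  constructor
  constructor
  · rintro ⟨s, k, hk, hs⟩
    -- inverse : n ↦ T (-(k n))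
    have hmem : (fun n => (T (-(k n : ℤ)) : LaurentPolynomial ℚ) : LF) ∈ EinvOF := by
      refine hk.subset fun n hn => ?_
      simp only [Set.mem_setOf_eq] at hn ⊢
      intro h0
      apply hn
      rw [h0]
      exact ⟨1, by simp⟩
    refine IsUnit.of_mul_eq_one (⟨_, hmem⟩ : EinvOF) ?_
    refine Subtype.ext (funext fun n => ?_)
    show Polynomial.toLaurent (s n) * T (-(k n : ℤ)) = 1
    rw [hs n, Polynomial.toLaurent_X_pow, ← T_add, add_neg_cancel, T_zero]
  · intro z
    classical
    set K : ℕ+ → ℕ := fun n =>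
      if h : (z : LF) n ∈ polyRange then 0 else ((z : LF) n).exists_T_pow.choose with hK
    set A : OF := fun n =>
      if h : (z : LF) n ∈ polyRange then h.choose
      else ((z : LF) n).exists_T_pow.choose_spec.choose with hA
    have hs : (fun n => (Polynomial.X : Polynomial ℚ) ^ K n : OF) ∈ monS := by
      refine ⟨K, z.2.subset fun n hn => ?_, fun n => rfl⟩
      simp only [Set.mem_setOf_eq, hK] at hn ⊢
      intro h
      exact hn (by simp [h])
    refine ⟨⟨A, ⟨_, hs⟩⟩, ?_⟩
    refine Subtype.ext (funext fun n => ?_)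
    show (z : LF) n * Polynomial.toLaurent ((Polynomial.X : Polynomial ℚ) ^ K n)
        = Polynomial.toLaurent (A n)
    rw [Polynomial.toLaurent_X_pow]
    by_cases h : (z : LF) n ∈ polyRange
    · simp only [hK, hA, dif_pos h]
      rw [h.choose_spec]
      simp [T_zero]
    · simp only [hK, hA, dif_neg h]
      exact (((z : LF) n).exists_T_pow.choose_spec.choose_spec).symm
  · intro a b h
    refine ⟨1, ?_⟩
    have : ∀ n, Polynomial.toLaurent (a n) = Polynomial.toLaurent (b n) := fun n =>
      congrFun (congrArg Subtype.val h) n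
    have : a = b := funext fun n => Polynomial.toLaurent_injective (this n)
    simp [this]

theorem stmt6 : Module.Flat OF EinvOF :=
  IsLocalization.flat EinvOF monS


end
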